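/- Let $\beta > 0$, $k \ge 1$, and suppose $f^+ : (0,\infty) \to (0,\infty)$ satisfies: for every $\theta > 0$ there exists $\lambda_\theta > 0$ such that $\lambda^{p+\theta} \le f^+(\lambda) \le \lambda^{p-\theta}$ for $0 < \lambda < \lambda_\theta$, where $p = 1 + 1/\beta > 1$. Fix $\xi \in (0, \beta)$ and $\alpha > 0$, and suppose sequences $\tilde W_k \ge k^{\xi}$ and $z_k := \tilde W_k \phi_k$ with $c k^{-\beta} \le \phi_k \le C k^{-\beta}$ for constants $c, C > 0$, and $z_k \to 0$. Define $\beta_k$ by $\tilde W_k^{-1/(2\beta)}\left(\frac{z_k^p}{f^+(z_k)}\right)^{1/2} = \tilde W_k^{-1/(2\beta_k)}$. Then $\beta_k \to \beta$ as $k \to \infty$. -/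

import Mathlib

open Real Set Filter Topology

/-- Rescaling-exponent convergence: if `f⁺` has the regular-variation-type
bounds `λ^{p+θ} ≤ f⁺(λ) ≤ λ^{p-θ}` near `0`, `W̃_k ≥ k^ξ`, `z_k = W̃_k φ_k`
with `c k^{-β} ≤ φ_k ≤ C k^{-β}` and `z_k → 0`, then the exponents `β_k`
defined by `W̃_k^{-1/(2β)} (z_k^p / f⁺(z_k))^{1/2} = W̃_k^{-1/(2β_k)}`
converge to `β`. -/
theorem stmt19 (β ξ α : ℝ) (hβ : 0 < β) (hξ : 0 < ξ) (hξβ : ξ < β) (hα : 0 < α)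
    (p : ℝ) (hpdef : p = 1 + 1 / β)
    (fplus : ℝ → ℝ) (hfpos : ∀ x > (0 : ℝ), 0 < fplus x)
    (hreg : ∀ θ > (0 : ℝ), ∃ lc > (0 : ℝ), ∀ lam : ℝ, 0 < lam → lam < lc →
      lam ^ (p + θ) ≤ fplus lam ∧ fplus lam ≤ lam ^ (p - θ))
    (W z φk βk : ℕ → ℝ) (c C : ℝ) (hc : 0 < c) (hC : 0 < C)
    (hW : ∀ k : ℕ, 1 ≤ k → (k : ℝ) ^ ξ ≤ W k)
    (hz : ∀ k : ℕ, 1 ≤ k → z k = W k * φk k)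
    (hφ : ∀ k : ℕ, 1 ≤ k → c * (k : ℝ) ^ (-β) ≤ φk k ∧ φk k ≤ C * (k : ℝ) ^ (-β))
    (hz0 : Tendsto z atTop (nhds 0))
    (hβk : ∀ k : ℕ, 1 ≤ k → (W k) ^ (-(1 / (2 * β))) * ((z k ^ p) / fplus (z k)) ^ ((1 : ℝ) / 2)
      = (W k) ^ (-(1 / (2 * βk k)))) :
    Tendsto βk atTop (nhds β) := by
  classical
  set q : ℕ → ℝ := fun k => z k ^ p / fplus (z k) with hq
  -- positivity of z
  have hzpos : ∀ k : ℕ, 1 ≤ k → 0 < z k := by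
    intro k hk
    have hk0 : (0:ℝ) < (k:ℝ) := by exact_mod_cast hk
    have hφk := (hφ k hk).1
    have hφpos : 0 < φk k := lt_of_lt_of_le (by positivity) hφk
    have hWk := hW k hk
    have hWpos : 0 < W k := lt_of_lt_of_le (by positivity) hWk
    rw [hz k hk]; positivity
  have hqpos : ∀ k : ℕ, 1 ≤ k → 0 < q k := by
    intro k hk
    have h1 := hzpos k hk
    have h2 := hfpos (z k) h1
    simp only [hq]
    positivity
  have hWge : ∀ k : ℕ, 1 ≤ k → (1:ℝ) ≤ W k := by
    intro k hk
    have hk1 : (1:ℝ) ≤ (k:ℝ) := by exact_mod_cast hk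
    calc (1:ℝ) = (1:ℝ) ^ ξ := (Real.one_rpow ξ).symm
    _ ≤ (k:ℝ) ^ ξ := Real.rpow_le_rpow zero_le_one hk1 hξ.le
    _ ≤ W k := hW k hk
  have hW1 : ∀ k : ℕ, 2 ≤ k → 1 < W k := by
    intro k hk
    have hk1 : (1:ℝ) < (k:ℝ) := by exact_mod_cast hk
    calc (1:ℝ) = (1:ℝ) ^ ξ := (Real.one_rpow ξ).symm
    _ < (k:ℝ) ^ ξ := Real.rpow_lt_rpow zero_le_one hk1 hξ
    _ ≤ W k := hW k (le_trans (by norm_num) hk)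
  -- key identity for k ≥ 2
  have hkey : ∀ k : ℕ, 2 ≤ k → (βk k)⁻¹ = β⁻¹ - Real.log (q k) / Real.log (W k) := by
    intro k hk
    have hk1 : 1 ≤ k := le_trans (by norm_num) hk
    have hWpos : 0 < W k := lt_of_lt_of_le one_pos (hWge k hk1)
    have hlogW : 0 < Real.log (W k) := Real.log_pos (hW1 k hk)
    have heq := hβk k hk1
    have hqp := hqpos k hk1
    have heq' := congrArg Real.log heq
    rw [Real.log_mul (by positivity) (by positivity), Real.log_rpow hWpos,
      Real.log_rpow hqp, Real.log_rpow hWpos] at heq'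
    simp only [one_div, mul_inv] at heq'
    have h3 : (βk k)⁻¹ * Real.log (W k) = β⁻¹ * Real.log (W k) - Real.log (q k) := by
      linarith
    have hL : Real.log (W k) ≠ 0 := ne_of_gt hlogW
    have h4 : (βk k)⁻¹ = (β⁻¹ * Real.log (W k) - Real.log (q k)) / Real.log (W k) := by
      rw [← h3, mul_div_cancel_right₀ _ hL]
    rw [h4, sub_div, mul_div_cancel_right₀ _ hL]
  -- main estimate
  have ht : Tendsto (fun k => Real.log (q k) / Real.log (W k)) atTop (nhds 0) := by
    rw [Metric.tendsto_atTop]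
    intro ε hε
    set D : ℝ := β - ξ + |Real.log c| + 1 with hD
    have hDpos : 0 < D := by have := abs_nonneg (Real.log c); simp only [hD]; linarith
    set θ : ℝ := ε * ξ / (2 * D) with hθ
    have hθpos : 0 < θ := by positivity
    obtain ⟨lc, hlc, hbound⟩ := hreg θ hθpos
    have hzsm : ∀ᶠ k in atTop, z k < min lc 1 :=
      hz0.eventually (eventually_lt_nhds (lt_min hlc one_pos))
    obtain ⟨N1, hN1⟩ := eventually_atTop.mp hzsm
    refine ⟨max N1 3, fun k hk => ?_⟩
    have hkN1 : N1 ≤ k := le_trans (le_max_left _ _) hk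
    have hk3 : 3 ≤ k := le_trans (le_max_right _ _) hk
    have hk1 : 1 ≤ k := le_trans (by norm_num) hk3
    have hk0 : (0:ℝ) < (k:ℝ) := by positivity
    have hk3' : (3:ℝ) ≤ (k:ℝ) := by exact_mod_cast hk3
    have hlogk : 1 ≤ Real.log k := by
      rw [Real.le_log_iff_exp_le hk0]
      calc Real.exp 1 ≤ 2.7182818286 := (Real.exp_one_lt_d9).le
      _ ≤ 3 := by norm_num
      _ ≤ (k:ℝ) := hk3'
    have hzk := hzpos k hk1
    have hzlt : z k < lc := lt_of_lt_of_le (hN1 k hkN1) (min_le_left _ _)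
    have hzlt1 : z k < 1 := lt_of_lt_of_le (hN1 k hkN1) (min_le_right _ _)
    obtain ⟨hb1, hb2⟩ := hbound (z k) hzk hzlt
    have hfz := hfpos (z k) hzk
    -- q bounds
    have hq1 : q k ≤ z k ^ (-θ) := by
      have h1 : z k ^ p / fplus (z k) ≤ z k ^ p / z k ^ (p + θ) :=
        div_le_div_of_nonneg_left (by positivity) (by positivity) hb1
      have h2 : z k ^ p / z k ^ (p + θ) = z k ^ (-θ) := by
        rw [← Real.rpow_sub hzk]; ring_nf
      simpa [hq, h2] using h1
    have hq2 : z k ^ θ ≤ q k := by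
      have h1 : z k ^ p / z k ^ (p - θ) ≤ z k ^ p / fplus (z k) :=
        div_le_div_of_nonneg_left (by positivity) hfz hb2
      have h2 : z k ^ p / z k ^ (p - θ) = z k ^ θ := by
        rw [← Real.rpow_sub hzk]; ring_nf
      simpa [hq, h2] using h1
    have hlogz_neg : Real.log (z k) < 0 := Real.log_neg hzk hzlt1
    have hlq1 : Real.log (q k) ≤ -θ * Real.log (z k) := by
      calc Real.log (q k) ≤ Real.log (z k ^ (-θ)) := Real.log_le_log (hqpos k hk1) hq1
      _ = -θ * Real.log (z k) := Real.log_rpow hzk (-θ)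
    have hlq2 : θ * Real.log (z k) ≤ Real.log (q k) := by
      calc θ * Real.log (z k) = Real.log (z k ^ θ) := (Real.log_rpow hzk θ).symm
      _ ≤ Real.log (q k) := Real.log_le_log (by positivity) hq2
    have habsq : |Real.log (q k)| ≤ θ * (-Real.log (z k)) := by
      rw [abs_le]; constructor <;> linarith
    -- lower bound on z k
    have hzlb : c * (k:ℝ) ^ (ξ - β) ≤ z k := by
      rw [hz k hk1]
      have h1 : (k:ℝ) ^ ξ * (c * (k:ℝ) ^ (-β)) ≤ W k * φk k := by
        apply mul_le_mul (hW k hk1) (hφ k hk1).1 (by positivity)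
        exact le_trans (by positivity) (hW k hk1)
      calc c * (k:ℝ) ^ (ξ - β) = (k:ℝ) ^ ξ * (c * (k:ℝ) ^ (-β)) := by
            rw [show ξ - β = ξ + -β by ring, Real.rpow_add hk0]; ring
      _ ≤ W k * φk k := h1
    have hlogzlb : Real.log c + (ξ - β) * Real.log k ≤ Real.log (z k) := by
      calc Real.log c + (ξ - β) * Real.log k = Real.log (c * (k:ℝ) ^ (ξ - β)) := by
            rw [Real.log_mul (ne_of_gt hc) (by positivity), Real.log_rpow hk0]
      _ ≤ Real.log (z k) := Real.log_le_log (by positivity) hzlb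
    have hnegz : -Real.log (z k) ≤ D * Real.log k := by
      have h1 : -Real.log c ≤ |Real.log c| := neg_le_abs _
      have h2 : |Real.log c| * 1 ≤ |Real.log c| * Real.log k :=
        mul_le_mul_of_nonneg_left hlogk (abs_nonneg _)
      simp only [hD]
      nlinarith [hlogzlb]
    -- lower bound on log W
    have hlogWlb : ξ * Real.log k ≤ Real.log (W k) := by
      calc ξ * Real.log k = Real.log ((k:ℝ) ^ ξ) := (Real.log_rpow hk0 ξ).symm
      _ ≤ Real.log (W k) := Real.log_le_log (by positivity) (hW k hk1)
    have hlkpos : 0 < Real.log k := lt_of_lt_of_le one_pos hlogk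
    have hlogWpos : 0 < Real.log (W k) :=
      lt_of_lt_of_le (by positivity) hlogWlb
    -- conclude
    rw [Real.dist_eq, sub_zero, abs_div, abs_of_pos hlogWpos]
    have hnum : |Real.log (q k)| ≤ θ * D * Real.log k := by
      calc |Real.log (q k)| ≤ θ * (-Real.log (z k)) := habsq
      _ ≤ θ * (D * Real.log k) := mul_le_mul_of_nonneg_left hnegz hθpos.le
      _ = θ * D * Real.log k := by ring
    have hmain : |Real.log (q k)| / Real.log (W k) ≤ (θ * D * Real.log k) / (ξ * Real.log k) :=
      div_le_div₀ (by positivity) hnum (by positivity) hlogWlb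
    have hsimp : (θ * D * Real.log k) / (ξ * Real.log k) = ε / 2 := by
      have hlk : Real.log k ≠ 0 := ne_of_gt hlkpos
      rw [hθ]
      field_simp
    rw [hsimp] at hmain
    linarith
  -- assemble
  have hr : Tendsto (fun k => β⁻¹ - Real.log (q k) / Real.log (W k)) atTop (nhds β⁻¹) := by
    have := (tendsto_const_nhds (x := β⁻¹) (f := atTop (α := ℕ))).sub ht
    simpa using this
  have hβinv : β⁻¹ ≠ 0 := by positivity
  have hrpos : ∀ᶠ k in atTop, 0 < β⁻¹ - Real.log (q k) / Real.log (W k) :=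
    hr.eventually (eventually_gt_nhds (by positivity))
  have hfin : Tendsto (fun k => (β⁻¹ - Real.log (q k) / Real.log (W k))⁻¹) atTop (nhds β) := by
    have := hr.inv₀ hβinv
    simpa using this
  apply hfin.congr'
  filter_upwards [eventually_ge_atTop 2] with k hk
  rw [← hkey k hk, inv_inv]
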